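/- arXiv:1810.01323 — 3 statements merged into one kernel-verified Lean document; each statement's English description precedes it below -/
import Mathlib

section
/- Consider the linear model $Y = X\beta_0 + \epsilon$ with $X \in \mathbb{R}^{n \times p}$ ($n > p$) random and independent of $\epsilon$, where $\epsilon$ has independent components with $\mathrm{E}(\epsilon_i) = 0$ and $\mathrm{Var}(\epsilon_i) = \sigma_i^2$ (possibly unequal), and $X^T X$ is almost surely invertible. Let $\hat\beta = (X^TX)^{-1}X^T Y$ and $\hat\sigma^2 = \|Y - X\hat\beta\|_2^2/(n - p)$, and set $D = \mathrm{diag}(\sigma_1^2, \ldots, \sigma_n^2)$. Then $\mathrm{E}(\hat\sigma^2) = \operatorname{tr}(D)/n$; in particular $\hat\sigma^2$ is an unbiased estimator of the average error variance. -/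
open MeasureTheory ProbabilityTheory Matrix

section AuxMat

variable {n p : ℕ}

/-- The hat (projection) matrix `A (AᵀA)⁻¹ Aᵀ`. -/
noncomputable def projH (A : Matrix (Fin n) (Fin p) ℝ) : Matrix (Fin n) (Fin n) ℝ :=
  A * (Aᵀ * A)⁻¹ * Aᵀ

lemma projH_transpose (A : Matrix (Fin n) (Fin p) ℝ) : (projH A)ᵀ = projH A := by
  have h1 : ((Aᵀ * A)⁻¹)ᵀ = (Aᵀ * A)⁻¹ := by
    rw [Matrix.transpose_nonsing_inv, Matrix.transpose_mul, Matrix.transpose_transpose]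
  simp only [projH, Matrix.transpose_mul, Matrix.transpose_transpose, h1, Matrix.mul_assoc]

lemma projH_symm (A : Matrix (Fin n) (Fin p) ℝ) (a b : Fin n) : projH A a b = projH A b a := by
  conv_lhs => rw [← projH_transpose A]
  simp [Matrix.transpose_apply]

lemma projH_mul (A : Matrix (Fin n) (Fin p) ℝ) (h : IsUnit (Aᵀ * A).det) :
    projH A * A = A := by
  have h1 : (Aᵀ * A)⁻¹ * (Aᵀ * A) = 1 := Matrix.nonsing_inv_mul _ h
  calc projH A * A = A * ((Aᵀ * A)⁻¹ * (Aᵀ * A)) := by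
        simp only [projH, Matrix.mul_assoc]
    _ = A := by rw [h1, Matrix.mul_one]

lemma projH_idem (A : Matrix (Fin n) (Fin p) ℝ) (h : IsUnit (Aᵀ * A).det) :
    projH A * projH A = projH A := by
  have h1 : (Aᵀ * A)⁻¹ * (Aᵀ * A) = 1 := Matrix.nonsing_inv_mul _ h
  simp only [projH, Matrix.mul_assoc]
  rw [← Matrix.mul_assoc Aᵀ A, ← Matrix.mul_assoc (Aᵀ * A)⁻¹ (Aᵀ * A), h1, Matrix.one_mul]

lemma projH_entry (A : Matrix (Fin n) (Fin p) ℝ) (h : IsUnit (Aᵀ * A).det) (i j : Fin n) :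
    projH A i j = ∑ k, projH A k i * projH A k j := by
  have h1 : projH A i j = (projH A * projH A) i j := by rw [projH_idem A h]
  rw [Matrix.mul_apply] at h1
  rw [h1]
  exact Finset.sum_congr rfl fun k _ => by rw [projH_symm A i k]

lemma projH_diag_nonneg (A : Matrix (Fin n) (Fin p) ℝ) (h : IsUnit (Aᵀ * A).det) (i : Fin n) :
    0 ≤ projH A i i := by
  rw [projH_entry A h i i]
  exact Finset.sum_nonneg fun k _ => mul_self_nonneg _

lemma projH_diag_le_one (A : Matrix (Fin n) (Fin p) ℝ) (h : IsUnit (Aᵀ * A).det) (i : Fin n) :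
    projH A i i ≤ 1 := by
  have h1 := projH_entry A h i i
  have h2 : projH A i i * projH A i i ≤ ∑ k, projH A k i * projH A k i :=
    Finset.single_le_sum (f := fun k => projH A k i * projH A k i)
      (fun k _ => mul_self_nonneg _) (Finset.mem_univ i)
  rw [← h1] at h2
  nlinarith [projH_diag_nonneg A h i]

lemma projH_abs_le_one (A : Matrix (Fin n) (Fin p) ℝ) (h : IsUnit (Aᵀ * A).det) (i j : Fin n) :
    |projH A i j| ≤ 1 := by
  have hcs := Finset.sum_mul_sq_le_sq_mul_sq Finset.univ (fun k => projH A k i)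
    (fun k => projH A k j)
  have hii : ∑ k, projH A k i ^ 2 = projH A i i := by
    rw [projH_entry A h i i]; exact Finset.sum_congr rfl fun k _ => (sq _)
  have hjj : ∑ k, projH A k j ^ 2 = projH A j j := by
    rw [projH_entry A h j j]; exact Finset.sum_congr rfl fun k _ => (sq _)
  have hij : ∑ k, projH A k i * projH A k j = projH A i j := (projH_entry A h i j).symm
  rw [hii, hjj, hij] at hcs
  nlinarith [sq_abs (projH A i j), abs_nonneg (projH A i j), projH_diag_nonneg A h i,
    projH_diag_nonneg A h j, projH_diag_le_one A h i, projH_diag_le_one A h j]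

lemma projH_trace (A : Matrix (Fin n) (Fin p) ℝ) (h : IsUnit (Aᵀ * A).det) :
    ∑ i, projH A i i = (p : ℝ) := by
  have h1 : (projH A).trace = ((Aᵀ * A) * (Aᵀ * A)⁻¹).trace := by
    rw [projH, Matrix.trace_mul_comm (A * (Aᵀ * A)⁻¹) Aᵀ, ← Matrix.mul_assoc]
  rw [Matrix.mul_nonsing_inv _ h, Matrix.trace_one] at h1
  have h2 : (projH A).trace = ∑ i, projH A i i := rfl
  rw [h2] at h1
  rw [h1]
  simp

lemma projH_submatrix (A : Matrix (Fin n) (Fin p) ℝ) (e : Fin n ≃ Fin n) (i j : Fin n) :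
    projH (A.submatrix e id) i j = projH A (e i) (e j) := by
  have hg : (A.submatrix e id)ᵀ * A.submatrix e id = Aᵀ * A := by
    ext a b
    simp only [Matrix.mul_apply, Matrix.transpose_apply, Matrix.submatrix_apply, id]
    exact e.sum_comp fun k => A k a * A k b
  simp only [projH, hg, Matrix.mul_apply, Matrix.transpose_apply, Matrix.submatrix_apply, id]

lemma measurable_det_pi {m : ℕ} : Measurable fun g : Fin m → Fin m → ℝ => (Matrix.of g).det := by
  simp_rw [Matrix.det_apply]
  refine Finset.measurable_sum _ fun σ _ => ?_
  have : Measurable fun g : Fin m → Fin m → ℝ => ∏ i, Matrix.of g (σ i) i :=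
    Finset.measurable_prod _ fun i _ => (measurable_pi_apply _).comp (measurable_pi_apply _)
  exact this.const_smul _

lemma measurable_adjugate_pi {m : ℕ} (a b : Fin m) :
    Measurable fun g : Fin m → Fin m → ℝ => (Matrix.of g).adjugate a b := by
  classical
  simp_rw [Matrix.adjugate_apply]
  have hu : Measurable fun g : Fin m → Fin m → ℝ =>
      Function.update g b (Pi.single a (1 : ℝ)) := by
    refine measurable_pi_lambda _ fun k => ?_
    by_cases hk : k = b
    · subst hk; simp only [Function.update_self]; exact measurable_const
    · simp only [Function.update_of_ne hk]; exact measurable_pi_apply k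
  have : ∀ g : Fin m → Fin m → ℝ, (Matrix.of g).updateRow b (Pi.single a 1) =
      Matrix.of (Function.update g b (Pi.single a (1 : ℝ))) := fun g => rfl
  simp_rw [this]
  exact measurable_det_pi.comp hu

lemma measurable_inv_pi {m : ℕ} (a b : Fin m) :
    Measurable fun g : Fin m → Fin m → ℝ => (Matrix.of g)⁻¹ a b := by
  have : ∀ g : Fin m → Fin m → ℝ,
      (Matrix.of g)⁻¹ a b = ((Matrix.of g).det)⁻¹ * (Matrix.of g).adjugate a b := by
    intro g
    rw [Matrix.inv_def, Matrix.smul_apply, Ring.inverse_eq_inv, smul_eq_mul]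
  simp_rw [this]
  exact (measurable_det_pi.inv).mul (measurable_adjugate_pi a b)

lemma measurable_gram_pi : Measurable fun r : Fin n → Fin p → ℝ =>
    (fun a b : Fin p => ∑ k, r k a * r k b) := by
  refine measurable_pi_lambda _ fun a => measurable_pi_lambda _ fun b => ?_
  exact Finset.measurable_sum _ fun k _ => by fun_prop

lemma gram_eq (r : Fin n → Fin p → ℝ) :
    (Matrix.of r)ᵀ * Matrix.of r = Matrix.of (fun a b : Fin p => ∑ k, r k a * r k b) := by
  ext a b
  simp [Matrix.mul_apply]

lemma measurable_projH_entry (i j : Fin n) :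
    Measurable fun r : Fin n → Fin p → ℝ => projH (Matrix.of r) i j := by
  have hrw : ∀ r : Fin n → Fin p → ℝ, projH (Matrix.of r) i j =
      ∑ b, (∑ a, r i a * (Matrix.of (fun a b : Fin p => ∑ k, r k a * r k b))⁻¹ a b) * r j b := by
    intro r
    rw [projH, gram_eq, Matrix.mul_apply]
    exact Finset.sum_congr rfl fun b _ => by rw [Matrix.mul_apply]; rfl
  simp_rw [hrw]
  refine Finset.measurable_sum _ fun b _ => Measurable.mul ?_
    ((measurable_pi_apply b).comp (measurable_pi_apply j))
  refine Finset.measurable_sum _ fun a _ => Measurable.mul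
    ((measurable_pi_apply a).comp (measurable_pi_apply i)) ?_
  exact (measurable_inv_pi a b).comp measurable_gram_pi

end AuxMat

/-- Under heteroskedastic independent errors with variances `σᵢ²` and i.i.d. rows of a
random design `X` independent of the errors, the residual variance estimator
`σ̂² = ‖Y - Xβ̂‖₂²/(n-p)` satisfies `E(σ̂²) = tr(D)/n = (∑ᵢ σᵢ²)/n`. -/
theorem sigma_hat_unbiased_heteroskedastic {n p : ℕ} {Ω : Type*} [MeasurableSpace Ω]
    (μ : Measure Ω) [IsProbabilityMeasure μ] (hpn : p < n)
    (X : Ω → Matrix (Fin n) (Fin p) ℝ) (ε : Ω → Fin n → ℝ)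
    (β₀ : Fin p → ℝ) (σs : Fin n → ℝ)
    (hXmeas : Measurable fun ω i j => X ω i j)
    (hεmeas : ∀ i, Measurable fun ω => ε ω i)
    (hindep : IndepFun (fun ω i j => X ω i j) ε μ)
    (hεindep : iIndepFun (fun i ω => ε ω i) μ)
    (hmean : ∀ i, ∫ ω, ε ω i ∂μ = 0)
    (hvar : ∀ i, ∫ ω, (ε ω i) ^ 2 ∂μ = σs i)
    (hL2 : ∀ i, MemLp (fun ω => ε ω i) 2 μ)
    (hrows : iIndepFun (fun i ω => X ω i) μ)
    (hident : ∀ i j, μ.map (fun ω => X ω i) = μ.map (fun ω => X ω j))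
    (hinv : ∀ᵐ ω ∂μ, IsUnit ((X ω)ᵀ * X ω).det)
    (Y : Ω → Fin n → ℝ) (hY : Y = fun ω => (X ω) *ᵥ β₀ + ε ω)
    (βhat : Ω → Fin p → ℝ)
    (hβhat : βhat = fun ω => ((X ω)ᵀ * X ω)⁻¹ *ᵥ ((X ω)ᵀ *ᵥ Y ω))
    (σhat : Ω → ℝ)
    (hσhat : σhat = fun ω => (∑ i, (Y ω i - ((X ω) *ᵥ βhat ω) i) ^ 2) / ((n : ℝ) - p))
    (hint : Integrable σhat μ) :
    ∫ ω, σhat ω ∂μ = (∑ i, σs i) / n := by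
  classical
  have hn0 : (0 : ℝ) < n := by exact_mod_cast Nat.zero_lt_of_lt hpn
  have hnp : (0 : ℝ) < (n : ℝ) - p := by
    have : (p : ℝ) < n := by exact_mod_cast hpn
    linarith
  set H : Ω → Matrix (Fin n) (Fin n) ℝ := fun ω => projH (X ω) with hH
  -- measurability of entries of H
  have hHmeas : ∀ i j, Measurable fun ω => H ω i j := fun i j =>
    (measurable_projH_entry i j).comp hXmeas
  -- a.e. bounds on entries of H
  have hHbd : ∀ i j, ∀ᵐ ω ∂μ, |H ω i j| ≤ 1 := fun i j =>
    hinv.mono fun ω hω => projH_abs_le_one _ hω i j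
  have hHint : ∀ i j, Integrable (fun ω => H ω i j) μ := fun i j =>
    (integrable_const (1 : ℝ)).mono' (hHmeas i j).aestronglyMeasurable
      ((hHbd i j).mono fun ω h => by simpa using h)
  -- rows of X
  have hrmeas : Measurable (fun ω => (fun i => X ω i) : Ω → Fin n → Fin p → ℝ) := hXmeas
  have hrowm : ∀ i, Measurable fun ω => X ω i := fun i =>
    (measurable_pi_apply i).comp hXmeas
  -- joint law of the rows is the product of the marginals
  set m : Fin n → Measure (Fin p → ℝ) := fun i => μ.map (fun ω => X ω i) with hm
  haveI : ∀ i, IsProbabilityMeasure (m i) := fun i =>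
    Measure.isProbabilityMeasure_map (hrowm i).aemeasurable
  have hjoint : μ.map (fun ω => (fun i => X ω i)) = Measure.pi m := by
    refine (Measure.pi_eq fun s hs => ?_).symm
    rw [Measure.map_apply hrmeas (MeasurableSet.univ_pi hs)]
    have hpre : (fun ω => (fun i => X ω i)) ⁻¹' Set.univ.pi s
        = ⋂ i ∈ Finset.univ, (fun ω => X ω i) ⁻¹' s i := by
      ext ω; simp [Set.mem_pi]
    rw [hpre, hrows.measure_inter_preimage_eq_mul Finset.univ (fun i _ => hs i)]
    exact Finset.prod_congr rfl fun i _ => (Measure.map_apply (hrowm i) (hs i)).symm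
  -- invariance of the joint law under a permutation of the rows
  have hperm : ∀ e : Fin n ≃ Fin n,
      μ.map (fun ω => ((fun i => X ω i) ∘ e)) = μ.map (fun ω => (fun i => X ω i)) := by
    intro e
    have hcomp : Measurable fun r : Fin n → Fin p → ℝ => r ∘ e :=
      measurable_pi_lambda _ fun i => measurable_pi_apply (e i)
    have h1 : μ.map (fun ω => ((fun i => X ω i) ∘ e))
        = (μ.map (fun ω => (fun i => X ω i))).map (fun r => r ∘ e) :=
      (Measure.map_map hcomp hrmeas).symm
    rw [h1, hjoint]
    have hmm : (fun i : Fin n => m (e.symm i)) = m := by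
      funext i; exact hident (e.symm i) i
    have hkey := Measure.pi_map_piCongrLeft (e.symm)
      (β := fun _ : Fin n => Fin p → ℝ) m
    rw [hmm] at hkey
    have hfun : ⇑(MeasurableEquiv.piCongrLeft (fun _ : Fin n => Fin p → ℝ) e.symm)
        = fun r : Fin n → Fin p → ℝ => r ∘ e := by
      funext r
      funext b
      have h1 := MeasurableEquiv.piCongrLeft_apply_apply (e.symm)
        (β := fun _ : Fin n => Fin p → ℝ) r (e b)
      simpa using h1
    rw [← hfun]
    exact hkey
  -- exchangeability of the diagonal entries
  have hswap : ∀ i j : Fin n, ∫ ω, H ω j j ∂μ = ∫ ω, H ω i i ∂μ := by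
    intro i j
    set e := Equiv.swap i j with he
    set F : (Fin n → Fin p → ℝ) → ℝ := fun r => projH (Matrix.of r) i i with hF
    have hFm : Measurable F := measurable_projH_entry i i
    have hpcomp : Measurable fun ω => ((fun i => X ω i) ∘ e) := by
      exact (measurable_pi_lambda _ fun i => measurable_pi_apply (e i)).comp hrmeas
    have h1 : ∫ ω, F ((fun i => X ω i) ∘ e) ∂μ = ∫ ω, F (fun i => X ω i) ∂μ := by
      rw [← integral_map hpcomp.aemeasurable hFm.aestronglyMeasurable, hperm e,
        integral_map hrmeas.aemeasurable hFm.aestronglyMeasurable]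
    have h2 : ∀ ω, F ((fun i => X ω i) ∘ e) = H ω j j := by
      intro ω
      have hsub : Matrix.of ((fun i => X ω i) ∘ e) = (X ω).submatrix e id := rfl
      rw [hF]
      show projH (Matrix.of ((fun i => X ω i) ∘ e)) i i = H ω j j
      rw [hsub, projH_submatrix (X ω) e i i]
      simp [he, Equiv.swap_apply_left]
      rfl
    have h3 : ∀ ω, F (fun i => X ω i) = H ω i i := fun ω => rfl
    calc ∫ ω, H ω j j ∂μ = ∫ ω, F ((fun i => X ω i) ∘ e) ∂μ := by
          exact integral_congr_ae (Filter.Eventually.of_forall fun ω => (h2 ω).symm)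
      _ = ∫ ω, F (fun i => X ω i) ∂μ := h1
      _ = ∫ ω, H ω i i ∂μ := rfl
  -- the expected diagonal entry is p/n
  have htr : ∑ i : Fin n, ∫ ω, H ω i i ∂μ = (p : ℝ) := by
    rw [← integral_finset_sum _ fun i _ => hHint i i]
    have heq : (fun ω => ∑ i, H ω i i) =ᵐ[μ] fun _ => (p : ℝ) :=
      hinv.mono fun ω hω => projH_trace _ hω
    rw [integral_congr_ae heq]
    simp
  have hEH : ∀ i, ∫ ω, H ω i i ∂μ = (p : ℝ) / n := by
    intro i
    have hsum : ∑ j : Fin n, ∫ ω, H ω j j ∂μ = (n : ℝ) * ∫ ω, H ω i i ∂μ := by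
      rw [Finset.sum_congr rfl fun j _ => hswap i j]
      simp [Finset.card_univ, mul_comm]
    rw [htr] at hsum
    field_simp
    linarith [hsum]
  -- a.e. rewriting of σhat as a quadratic form in ε
  have hae : σhat =ᵐ[μ] fun ω =>
      (∑ i, ∑ j, ((1 : Matrix (Fin n) (Fin n) ℝ) i j - H ω i j) * (ε ω i * ε ω j))
        / ((n : ℝ) - p) := by
    filter_upwards [hinv] with ω hu
    set A := X ω with hA
    set v := ε ω with hv
    have hMsym : (1 - projH A)ᵀ = 1 - projH A := by
      rw [Matrix.transpose_sub, Matrix.transpose_one, projH_transpose]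
    have hMidem : (1 - projH A) * (1 - projH A) = 1 - projH A := by
      have : (1 - projH A) * (1 - projH A)
          = 1 - projH A - (projH A - projH A * projH A) := by noncomm_ring
      rw [this, projH_idem A hu, sub_self, sub_zero]
    -- residual is (1 - H) ε
    have hres : (fun k => Y ω k - (A *ᵥ βhat ω) k) = (1 - projH A) *ᵥ v := by
      have hXb : A *ᵥ βhat ω = projH A *ᵥ Y ω := by
        rw [hβhat]
        show A *ᵥ ((Aᵀ * A)⁻¹ *ᵥ (Aᵀ *ᵥ Y ω)) = projH A *ᵥ Y ω
        rw [Matrix.mulVec_mulVec, Matrix.mulVec_mulVec]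
        rfl
      have hYω : Y ω = A *ᵥ β₀ + v := by rw [hY]
      funext k
      have : Y ω k - (A *ᵥ βhat ω) k = (Y ω - projH A *ᵥ Y ω) k := by
        rw [hXb]; rfl
      rw [this]
      have h4 : Y ω - projH A *ᵥ Y ω = (1 - projH A) *ᵥ Y ω := by
        rw [Matrix.sub_mulVec, Matrix.one_mulVec]
      rw [h4, hYω, Matrix.mulVec_add, Matrix.mulVec_mulVec]
      have h5 : (1 - projH A) * A = 0 := by
        rw [Matrix.sub_mul, Matrix.one_mul, projH_mul A hu, sub_self]
      rw [h5]
      simp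
    -- quadratic form identity
    have hquad : ∑ k, (((1 - projH A) *ᵥ v) k) ^ 2
        = ∑ i, ∑ j, ((1 : Matrix (Fin n) (Fin n) ℝ) i j - projH A i j) * (v i * v j) := by
      set M := 1 - projH A with hMdef
      have h2 : (M *ᵥ v) ᵥ* M = M *ᵥ v := by
        rw [← Matrix.mulVec_transpose, Matrix.mulVec_mulVec, hMsym, hMidem]
      calc ∑ k, ((M *ᵥ v) k) ^ 2 = (M *ᵥ v) ⬝ᵥ (M *ᵥ v) := by
            simp [dotProduct, sq]
        _ = ((M *ᵥ v) ᵥ* M) ⬝ᵥ v := Matrix.dotProduct_mulVec _ _ _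
        _ = (M *ᵥ v) ⬝ᵥ v := by rw [h2]
        _ = ∑ i, ∑ j, ((1 : Matrix (Fin n) (Fin n) ℝ) i j - projH A i j) * (v i * v j) := by
            simp only [dotProduct, Matrix.mulVec, hMdef, Matrix.sub_apply]
            refine Finset.sum_congr rfl fun i _ => ?_
            rw [Finset.sum_mul]
            exact Finset.sum_congr rfl fun j _ => by ring
    rw [hσhat]
    show (∑ k, (Y ω k - (A *ᵥ βhat ω) k) ^ 2) / ((n : ℝ) - p) = _
    rw [show (∑ k, (Y ω k - (A *ᵥ βhat ω) k) ^ 2) = ∑ k, (((1 - projH A) *ᵥ v) k) ^ 2 from by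
      rw [← hres], hquad]
  -- integrability of each term of the quadratic form
  have hterm_int : ∀ i j, Integrable
      (fun ω => ((1 : Matrix (Fin n) (Fin n) ℝ) i j - H ω i j) * (ε ω i * ε ω j)) μ := by
    intro i j
    refine Integrable.mono' (((hL2 i).integrable_sq).add ((hL2 j).integrable_sq))
      ((measurable_const.sub (hHmeas i j)).mul
        ((hεmeas i).mul (hεmeas j))).aestronglyMeasurable ?_
    filter_upwards [hHbd i j] with ω hb
    have h1 : |(1 : Matrix (Fin n) (Fin n) ℝ) i j - H ω i j| ≤ 2 := by
      have : |(1 : Matrix (Fin n) (Fin n) ℝ) i j| ≤ 1 := by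
        rw [Matrix.one_apply]
        split <;> simp
      calc |(1 : Matrix (Fin n) (Fin n) ℝ) i j - H ω i j|
          ≤ |(1 : Matrix (Fin n) (Fin n) ℝ) i j| + |H ω i j| := abs_sub _ _
        _ ≤ 2 := by linarith
    rw [Real.norm_eq_abs, abs_mul, abs_mul]
    simp only [Pi.add_apply]
    have h2 : |(1 : Matrix (Fin n) (Fin n) ℝ) i j - H ω i j| * (|ε ω i| * |ε ω j|)
        ≤ 2 * (|ε ω i| * |ε ω j|) :=
      mul_le_mul_of_nonneg_right h1 (mul_nonneg (abs_nonneg _) (abs_nonneg _))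
    nlinarith [sq_nonneg (|ε ω i| - |ε ω j|), sq_abs (ε ω i), sq_abs (ε ω j)]
  -- independence factorization for each term
  have hfact : ∀ i j, ∫ ω, ((1 : Matrix (Fin n) (Fin n) ℝ) i j - H ω i j) * (ε ω i * ε ω j) ∂μ
      = (∫ ω, ((1 : Matrix (Fin n) (Fin n) ℝ) i j - H ω i j) ∂μ) * ∫ ω, ε ω i * ε ω j ∂μ := by
    intro i j
    have hφ : Measurable fun r : Fin n → Fin p → ℝ =>
        (1 : Matrix (Fin n) (Fin n) ℝ) i j - projH (Matrix.of r) i j :=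
      measurable_const.sub (measurable_projH_entry i j)
    have hψ : Measurable fun v : Fin n → ℝ => v i * v j :=
      (measurable_pi_apply i).mul (measurable_pi_apply j)
    have hIF : IndepFun (fun ω => (1 : Matrix (Fin n) (Fin n) ℝ) i j - H ω i j)
        (fun ω => ε ω i * ε ω j) μ := hindep.comp hφ hψ
    exact hIF.integral_fun_mul_eq_mul_integral
      ((measurable_const.sub (hHmeas i j)).aestronglyMeasurable)
      (((hεmeas i).mul (hεmeas j)).aestronglyMeasurable)
  -- second moments
  have hEεε : ∀ i j : Fin n, i ≠ j → ∫ ω, ε ω i * ε ω j ∂μ = 0 := by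
    intro i j hij
    have hIF : IndepFun (fun ω => ε ω i) (fun ω => ε ω j) μ := hεindep.indepFun hij
    rw [hIF.integral_fun_mul_eq_mul_integral ((hεmeas i).aestronglyMeasurable) ((hεmeas j).aestronglyMeasurable),
      hmean i, hmean j, mul_zero]
  -- put everything together
  rw [integral_congr_ae hae]
  have hdiv : ∫ ω, (∑ i, ∑ j, ((1 : Matrix (Fin n) (Fin n) ℝ) i j - H ω i j) * (ε ω i * ε ω j))
        / ((n : ℝ) - p) ∂μ
      = (∫ ω, ∑ i, ∑ j, ((1 : Matrix (Fin n) (Fin n) ℝ) i j - H ω i j)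
          * (ε ω i * ε ω j) ∂μ) / ((n : ℝ) - p) := integral_div _ _
  rw [hdiv]
  rw [integral_finset_sum _ fun i _ => integrable_finset_sum _ fun j _ => hterm_int i j]
  have hinner : ∀ i : Fin n, ∫ ω, ∑ j, ((1 : Matrix (Fin n) (Fin n) ℝ) i j - H ω i j)
      * (ε ω i * ε ω j) ∂μ = (1 - (p : ℝ) / n) * σs i := by
    intro i
    rw [integral_finset_sum _ fun j _ => hterm_int i j]
    rw [Finset.sum_eq_single_of_mem i (Finset.mem_univ i)]
    · rw [hfact i i]
      have h1 : ∫ ω, ((1 : Matrix (Fin n) (Fin n) ℝ) i i - H ω i i) ∂μ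
          = 1 - (p : ℝ) / n := by
        rw [integral_sub (integrable_const _) (hHint i i), integral_const, hEH i]
        simp [Matrix.one_apply_eq]
      have h2 : ∫ ω, ε ω i * ε ω i ∂μ = σs i := by
        rw [← hvar i]
        exact integral_congr_ae (Filter.Eventually.of_forall fun ω => (sq (ε ω i)).symm)
      rw [h1, h2]
    · intro j _ hji
      rw [hfact i j, hEεε i j (Ne.symm hji), mul_zero]
  rw [Finset.sum_congr rfl fun i _ => hinner i]
  rw [← Finset.mul_sum]
  have hne : (n : ℝ) - p ≠ 0 := ne_of_gt hnp
  have hnne : (n : ℝ) ≠ 0 := ne_of_gt hn0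
  field_simp
end

section
/- Let $W$ be a square-integrable function of $n$ independent random variables $Z_1, \ldots, Z_n$, and for each $i$ let $W_{(i)}$ be any square-integrable function of the variables excluding $Z_i$. Then $\mathrm{Var}(W) \leq \sum_{i=1}^n \mathrm{E}(W - W_{(i)})^2$ (Efron–Stein inequality, upper-bound form). -/
open MeasureTheory ProbabilityTheory

section Helpers

variable {X Y : Type*} [MeasurableSpace X] [MeasurableSpace Y]
  {ν : Measure X} {m : Measure Y} [IsProbabilityMeasure ν] [IsProbabilityMeasure m]

/-- Jensen: the square of the mean is at most the mean of the square. -/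
lemma ES.sq_int_le {f : X → ℝ} (hf : MemLp f 2 ν) :
    (∫ x, f x ∂ν) ^ 2 ≤ ∫ x, f x ^ 2 ∂ν := by
  have h := variance_nonneg f ν
  rw [variance_eq_sub hf] at h
  simp only [Pi.pow_apply] at h
  linarith

/-- The variance is at most the mean square deviation from any constant. -/
lemma ES.var_le {f : X → ℝ} (hf : MemLp f 2 ν) (c : ℝ) :
    variance f ν ≤ ∫ x, (f x - c) ^ 2 ∂ν := by
  have hfc : MemLp (fun x => f x - c) 2 ν := hf.sub (memLp_const c)
  have hvv : variance (fun x => f x - c) ν = variance f ν := by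
    rw [variance_eq_integral hfc.aemeasurable, variance_eq_integral hf.aemeasurable]
    have hc : ∫ x, (f x - c) ∂ν = (∫ x, f x ∂ν) - c := by
      rw [integral_sub (hf.integrable one_le_two) (integrable_const c)]
      simp
    congr 1
    funext x
    simp only [Pi.pow_apply, Pi.sub_apply, hc]
    ring
  have h2 := variance_eq_sub hfc
  simp only [Pi.pow_apply] at h2
  have hc2 := sq_nonneg (∫ x, (f x - c) ∂ν)
  linarith [hvv, h2]

/-- Slices of an `L²` function on a product are a.e. `L²`. -/
lemma ES.slice_memℒp {F : X × Y → ℝ} (hF : MemLp F 2 (ν.prod m)) :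
    ∀ᵐ y ∂m, MemLp (fun x => F (x, y)) 2 ν := by
  have hsq : Integrable (fun p => F p ^ 2) (ν.prod m) := hF.integrable_sq
  have h1 := hsq.prod_left_ae
  have h2 : ∀ᵐ y ∂m, AEStronglyMeasurable (fun x => F (x, y)) ν := by
    have h := (hF.1.prod_swap :
      AEStronglyMeasurable (fun z : Y × X => F z.swap) (m.prod ν)).prodMk_left
    exact h
  filter_upwards [h1, h2] with y hy1 hy2
  exact (memLp_two_iff_integrable_sq hy2).2 hy1

/-- Integrating out the first coordinate of an `L²` function gives an `L²` function. -/
lemma ES.int_fst_memℒp {F : X × Y → ℝ} (hF : MemLp F 2 (ν.prod m)) :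
    MemLp (fun y => ∫ x, F (x, y) ∂ν) 2 m := by
  have hgm : AEStronglyMeasurable (fun y => ∫ x, F (x, y) ∂ν) m := by
    have h := (hF.1.prod_swap :
      AEStronglyMeasurable (fun z : Y × X => F z.swap) (m.prod ν)).integral_prod_right'
    exact h
  refine (memLp_two_iff_integrable_sq hgm).2 ?_
  have hsq : Integrable (fun p => F p ^ 2) (ν.prod m) := hF.integrable_sq
  have hmaj : Integrable (fun y => ∫ x, F (x, y) ^ 2 ∂ν) m := hsq.integral_prod_right
  refine hmaj.mono' ?_ ?_
  · have : AEStronglyMeasurable (fun y => (∫ x, F (x, y) ∂ν) * (∫ x, F (x, y) ∂ν)) m :=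
      hgm.mul hgm
    simpa [pow_two] using this
  · filter_upwards [ES.slice_memℒp hF] with y hy
    have h1 : (∫ x, F (x, y) ∂ν) ^ 2 ≤ ∫ x, F (x, y) ^ 2 ∂ν := ES.sq_int_le hy
    have h2 : |(∫ x, F (x, y) ∂ν) ^ 2| = (∫ x, F (x, y) ∂ν) ^ 2 := abs_of_nonneg (sq_nonneg _)
    simpa [Real.norm_eq_abs, h2] using h1

/-- Jensen on products: partial integration decreases the second moment. -/
lemma ES.int_sq_int_le {F : X × Y → ℝ} (hF : MemLp F 2 (ν.prod m)) :
    ∫ y, (∫ x, F (x, y) ∂ν) ^ 2 ∂m ≤ ∫ p, F p ^ 2 ∂(ν.prod m) := by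
  have hsq : Integrable (fun p => F p ^ 2) (ν.prod m) := hF.integrable_sq
  rw [integral_prod_symm _ hsq]
  refine integral_mono_ae ?_ hsq.integral_prod_right ?_
  · exact (ES.int_fst_memℒp hF).integrable_sq
  · filter_upwards [ES.slice_memℒp hF] with y hy using ES.sq_int_le hy

/-- Key product-space decomposition step. -/
lemma ES.prod_step {F C : X × Y → ℝ} (hF : MemLp F 2 (ν.prod m))
    (hC : MemLp C 2 (ν.prod m)) (hCd : ∀ x x' y, C (x, y) = C (x', y)) :
    variance F (ν.prod m) ≤ (∫ p, (F p - C p) ^ 2 ∂(ν.prod m)) +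
      variance (fun y => ∫ x, F (x, y) ∂ν) m := by
  have hXne : Nonempty X := by
    by_contra h
    rw [not_nonempty_iff] at h
    have h1 : (ν Set.univ) = 1 := measure_univ
    rw [Set.univ_eq_empty_iff.2 h, measure_empty] at h1
    exact one_ne_zero h1.symm
  obtain ⟨x₀⟩ := hXne
  set c : Y → ℝ := fun y => C (x₀, y) with hc
  set g : Y → ℝ := fun y => ∫ x, F (x, y) ∂ν with hg
  have hgL : MemLp g 2 m := ES.int_fst_memℒp hF
  have hFsq : Integrable (fun p => F p ^ 2) (ν.prod m) := hF.integrable_sq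
  have hFi : Integrable F (ν.prod m) := hF.integrable one_le_two
  have hEg : ∫ y, g y ∂m = ∫ p, F p ∂(ν.prod m) := (integral_prod_symm F hFi).symm
  have hFmC : MemLp (fun p => F p - C p) 2 (ν.prod m) := hF.sub hC
  have hFmCsq : Integrable (fun p => (F p - C p) ^ 2) (ν.prod m) := hFmC.integrable_sq
  have key : (∫ p, F p ^ 2 ∂(ν.prod m)) - (∫ y, g y ^ 2 ∂m)
      ≤ ∫ p, (F p - C p) ^ 2 ∂(ν.prod m) := by
    rw [integral_prod_symm _ hFsq, integral_prod_symm _ hFmCsq]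
    have h1 : Integrable (fun y => ∫ x, F (x, y) ^ 2 ∂ν) m := hFsq.integral_prod_right
    have h2 : Integrable (fun y => g y ^ 2) m := hgL.integrable_sq
    rw [← integral_sub h1 h2]
    refine integral_mono_ae (h1.sub h2) hFmCsq.integral_prod_right ?_
    filter_upwards [ES.slice_memℒp hF] with y hy
    have hyi : Integrable (fun x => F (x, y)) ν := hy.integrable one_le_two
    have hysq : Integrable (fun x => F (x, y) ^ 2) ν := hy.integrable_sq
    have hCc : ∫ x, (F (x, y) - C (x, y)) ^ 2 ∂ν = ∫ x, (F (x, y) - c y) ^ 2 ∂ν := by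
      refine integral_congr_ae (Filter.Eventually.of_forall fun x => ?_)
      show (F (x, y) - C (x, y)) ^ 2 = (F (x, y) - c y) ^ 2
      rw [hCd x x₀ y]
    show (∫ x, F (x, y) ^ 2 ∂ν) - g y ^ 2 ≤ ∫ x, (F (x, y) - C (x, y)) ^ 2 ∂ν
    rw [hCc]
    have expand : ∫ x, (F (x, y) - c y) ^ 2 ∂ν
        = (∫ x, F (x, y) ^ 2 ∂ν) - 2 * c y * g y + c y ^ 2 := by
      have hpt : ∀ x, (F (x, y) - c y) ^ 2 = F (x, y) ^ 2 - (2 * c y) * F (x, y) + c y ^ 2 :=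
        fun x => by ring
      simp only [hpt]
      have hyi2 : Integrable (fun x => (2 * c y) * F (x, y)) ν := hyi.const_mul _
      have hsub : Integrable (fun x => F (x, y) ^ 2 - (2 * c y) * F (x, y)) ν := hysq.sub hyi2
      rw [integral_add hsub (integrable_const (c y ^ 2)),
        integral_sub hysq hyi2, integral_const_mul, integral_const]
      simp [hg]
    rw [expand]
    nlinarith [sq_nonneg (g y - c y)]
  have hv1 := variance_eq_sub hF
  have hv2 := variance_eq_sub hgL
  simp only [Pi.pow_apply] at hv1 hv2
  rw [hv1, hv2, hEg]
  linarith [key]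

end Helpers

universe u

theorem ES.aux : ∀ (n : ℕ) {Ω : Fin n → Type u} [inst : ∀ i, MeasurableSpace (Ω i)]
    (μ : ∀ i, Measure (Ω i)) [instP : ∀ i, IsProbabilityMeasure (μ i)]
    (W : (∀ i, Ω i) → ℝ) (Wd : Fin n → (∀ i, Ω i) → ℝ),
    MemLp W 2 (Measure.pi μ) → (∀ i, MemLp (Wd i) 2 (Measure.pi μ)) →
    (∀ i x y, (∀ j, j ≠ i → x j = y j) → Wd i x = Wd i y) →
    variance W (Measure.pi μ) ≤ ∑ i, ∫ x, (W x - Wd i x) ^ 2 ∂(Measure.pi μ) := by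
  intro n
  induction n with
  | zero =>
    intro Ω inst μ instP W Wd hW hWd hdep
    have hd : ∀ x : ∀ i, Ω i, x = (fun i => i.elim0) := fun x => funext fun i => i.elim0
    have hWc : W = fun _ => W (fun i => i.elim0) := funext fun x => by rw [hd x]
    rw [hWc, variance_eq_sub (memLp_const _)]
    simp
  | succ n ih =>
    intro Ω inst μ instP W Wd hW hWd hdep
    set π := Measure.pi μ with hπ
    set e := MeasurableEquiv.piFinSuccAbove Ω 0 with he
    have hmp := measurePreserving_piFinSuccAbove μ 0
    set ν := μ 0 with hν
    set m := Measure.pi (fun j => μ ((0 : Fin (n + 1)).succAbove j)) with hm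
    have hem : MeasurePreserving e.symm (ν.prod m) π := MeasurePreserving.symm e hmp
    have hF : MemLp (fun p => W (e.symm p)) 2 (ν.prod m) := hW.comp_measurePreserving hem
    have hD : ∀ i, MemLp (fun p => Wd i (e.symm p)) 2 (ν.prod m) :=
      fun i => (hWd i).comp_measurePreserving hem
    have hesymm : ∀ (x : Ω 0) (y : ∀ j, Ω ((0 : Fin (n + 1)).succAbove j)),
        e.symm (x, y) = Fin.insertNth 0 x y := fun x y => rfl
    have htrans : ∀ (i : Fin (n + 1)), ∫ x, (W x - Wd i x) ^ 2 ∂π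
        = ∫ p, (W (e.symm p) - Wd i (e.symm p)) ^ 2 ∂(ν.prod m) :=
      fun i => (hem.integral_comp e.symm.measurableEmbedding
        (fun x => (W x - Wd i x) ^ 2)).symm
    have hvar : variance W π = variance (fun p => W (e.symm p)) (ν.prod m) := by
      rw [variance_eq_sub hW, variance_eq_sub hF]
      simp only [Pi.pow_apply]
      rw [hem.integral_comp e.symm.measurableEmbedding (fun x => W x ^ 2),
        hem.integral_comp e.symm.measurableEmbedding W]
    -- comparison function for coordinate 0
    have hD0dep : ∀ (x x' : Ω 0) y, Wd 0 (e.symm (x, y)) = Wd 0 (e.symm (x', y)) := by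
      intro x x' y
      apply hdep 0
      intro j hj
      obtain ⟨k, rfl⟩ := Fin.exists_succAbove_eq hj
      rw [hesymm, hesymm, Fin.insertNth_apply_succAbove, Fin.insertNth_apply_succAbove]
    set g : (∀ j, Ω ((0 : Fin (n + 1)).succAbove j)) → ℝ :=
      fun y => ∫ x, W (e.symm (x, y)) ∂ν with hgdef
    set G : Fin n → (∀ j, Ω ((0 : Fin (n + 1)).succAbove j)) → ℝ :=
      fun i y => ∫ x, Wd ((0 : Fin (n + 1)).succAbove i) (e.symm (x, y)) ∂ν with hGdef
    have hgL : MemLp g 2 m := ES.int_fst_memℒp hF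
    have hGL : ∀ i, MemLp (G i) 2 m := fun i => ES.int_fst_memℒp (hD _)
    have hGdep : ∀ i y y', (∀ j, j ≠ i → y j = y' j) → G i y = G i y' := by
      intro i y y' hyy
      refine integral_congr_ae (Filter.Eventually.of_forall fun x => ?_)
      apply hdep ((0 : Fin (n + 1)).succAbove i)
      intro j hj
      rcases eq_or_ne j 0 with rfl | hj0
      · rw [hesymm, hesymm, Fin.insertNth_apply_same, Fin.insertNth_apply_same]
      · obtain ⟨k, rfl⟩ := Fin.exists_succAbove_eq hj0
        rw [hesymm, hesymm, Fin.insertNth_apply_succAbove, Fin.insertNth_apply_succAbove]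
        exact hyy k (fun hki => hj (by rw [hki]))
    have hih := ih (fun j => μ ((0 : Fin (n + 1)).succAbove j)) g G hgL hGL hGdep
    have hperI : ∀ i : Fin n, ∫ y, (g y - G i y) ^ 2 ∂m
        ≤ ∫ p, (W (e.symm p) - Wd ((0 : Fin (n + 1)).succAbove i) (e.symm p)) ^ 2
            ∂(ν.prod m) := by
      intro i
      have hH : MemLp (fun p => W (e.symm p)
          - Wd ((0 : Fin (n + 1)).succAbove i) (e.symm p)) 2 (ν.prod m) := hF.sub (hD _)
      have hae : ∀ᵐ y ∂m, g y - G i y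
          = ∫ x, (W (e.symm (x, y)) - Wd ((0 : Fin (n + 1)).succAbove i) (e.symm (x, y))) ∂ν := by
        filter_upwards [ES.slice_memℒp hF, ES.slice_memℒp (hD ((0 : Fin (n + 1)).succAbove i))]
          with y h1 h2
        exact (integral_sub (h1.integrable one_le_two) (h2.integrable one_le_two)).symm
      calc ∫ y, (g y - G i y) ^ 2 ∂m
          = ∫ y, (∫ x, (W (e.symm (x, y))
              - Wd ((0 : Fin (n + 1)).succAbove i) (e.symm (x, y))) ∂ν) ^ 2 ∂m := by
            refine integral_congr_ae (hae.mono fun y hy => ?_)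
            exact congrArg (fun t => t ^ 2) hy
        _ ≤ ∫ p, (W (e.symm p)
              - Wd ((0 : Fin (n + 1)).succAbove i) (e.symm p)) ^ 2 ∂(ν.prod m) :=
            ES.int_sq_int_le hH
    calc variance W π = variance (fun p => W (e.symm p)) (ν.prod m) := hvar
      _ ≤ (∫ p, (W (e.symm p) - Wd 0 (e.symm p)) ^ 2 ∂(ν.prod m)) + variance g m :=
          ES.prod_step hF (hD 0) hD0dep
      _ ≤ (∫ p, (W (e.symm p) - Wd 0 (e.symm p)) ^ 2 ∂(ν.prod m))
            + ∑ i : Fin n, ∫ y, (g y - G i y) ^ 2 ∂m := by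
          exact add_le_add_right hih _
      _ ≤ (∫ p, (W (e.symm p) - Wd 0 (e.symm p)) ^ 2 ∂(ν.prod m))
            + ∑ i : Fin n, ∫ p, (W (e.symm p)
                - Wd ((0 : Fin (n + 1)).succAbove i) (e.symm p)) ^ 2 ∂(ν.prod m) := by
          exact add_le_add_right (Finset.sum_le_sum fun i _ => hperI i) _
      _ = ∑ i, ∫ x, (W x - Wd i x) ^ 2 ∂π := by
          rw [Fin.sum_univ_succAbove (fun i => ∫ x, (W x - Wd i x) ^ 2 ∂π) 0]
          rw [htrans 0]
          congr 1
          exact Finset.sum_congr rfl fun i _ => (htrans _).symm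

/-- Efron–Stein inequality (upper-bound form): if `W` is a square-integrable function of
`n` independent random variables and `W₍ᵢ₎` is any square-integrable function not
depending on the `i`-th variable, then `Var(W) ≤ ∑ᵢ E(W - W₍ᵢ₎)²`. -/
theorem efron_stein_upper_bound {n : ℕ} {Ω : Fin n → Type*}
    [∀ i, MeasurableSpace (Ω i)]
    (μ : ∀ i, Measure (Ω i)) [∀ i, IsProbabilityMeasure (μ i)]
    (W : (∀ i, Ω i) → ℝ) (Wd : Fin n → (∀ i, Ω i) → ℝ)
    (hW : MemLp W 2 (Measure.pi μ))
    (hWd : ∀ i, MemLp (Wd i) 2 (Measure.pi μ))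
    (hdep : ∀ i x y, (∀ j, j ≠ i → x j = y j) → Wd i x = Wd i y) :
    variance W (Measure.pi μ) ≤
      ∑ i, ∫ x, (W x - Wd i x) ^ 2 ∂(Measure.pi μ) := by
  exact ES.aux n μ W Wd hW hWd hdep
end

section
/- Let $g$ and $h$ be probability density functions on a measure space with corresponding probability measures $G$ and $H$. Then $\int \min\{g(x), h(x)\}\, dx \geq \frac{1}{2} \exp\{-\mathrm{KL}(G, H)\}$, where $\mathrm{KL}(G, H) = \int \log\{g(x)/h(x)\}\, g(x)\, dx$ is the Kullback–Leibler divergence. -/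
open MeasureTheory

lemma sqrt_mul_le_add_div_two {a b : ℝ} (ha : 0 ≤ a) (hb : 0 ≤ b) :
    Real.sqrt (a * b) ≤ (a + b) / 2 := by
  nlinarith [Real.sq_sqrt (mul_nonneg ha hb), Real.sqrt_nonneg (a * b), sq_nonneg (a - b),
    sq_nonneg (Real.sqrt (a * b) - (a + b) / 2)]

/-- Le Cam-type bound: for probability densities `g, h` (w.r.t. a dominating measure `ν`)
with `h = 0 → g = 0` a.e. and integrable KL integrand,
`∫ min(g,h) ≥ (1/2) exp(-KL(G,H))` where `KL(G,H) = ∫ log(g/h) g`. -/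
theorem min_density_ge_exp_neg_KL {α : Type*} [MeasurableSpace α] (ν : Measure α)
    (g h : α → ℝ) (hgm : Measurable g) (hhm : Measurable h)
    (hg0 : ∀ x, 0 ≤ g x) (hh0 : ∀ x, 0 ≤ h x)
    (hgint : Integrable g ν) (hhint : Integrable h ν)
    (hg1 : ∫ x, g x ∂ν = 1) (hh1 : ∫ x, h x ∂ν = 1)
    (habs : ∀ᵐ x ∂ν, h x = 0 → g x = 0)
    (hKL : Integrable (fun x => Real.log (g x / h x) * g x) ν) :
    (1 / 2) * Real.exp (-(∫ x, Real.log (g x / h x) * g x ∂ν)) ≤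
      ∫ x, min (g x) (h x) ∂ν := by
  set KL : ℝ := ∫ x, Real.log (g x / h x) * g x ∂ν with hKLdef
  set m : ℝ := -(1 / 2) * KL with hmdef
  set f : α → ℝ := fun x => -(1 / 2) * Real.log (g x / h x) with hfdef
  have hfg_int : Integrable (fun x => f x * g x) ν := by
    have := hKL.const_mul (-(1 / 2))
    simpa [hfdef, mul_assoc] using this
  have hfg_integral : ∫ x, f x * g x ∂ν = m := by
    rw [hmdef, hKLdef]
    rw [show (fun x => f x * g x) = fun x => -(1/2) * (Real.log (g x / h x) * g x) by
      funext x; simp [hfdef]; ring]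
    rw [integral_const_mul]
  set φ : α → ℝ := fun x => Real.sqrt (g x * h x) with hφdef
  have hφ0 : ∀ x, 0 ≤ φ x := fun x => Real.sqrt_nonneg _
  have hφle : ∀ x, φ x ≤ (g x + h x) / 2 := fun x =>
    sqrt_mul_le_add_div_two (hg0 x) (hh0 x)
  have hφmeas : Measurable φ := (hgm.mul hhm).sqrt
  have hφint : Integrable φ ν := by
    refine Integrable.mono' ((hgint.add hhint).div_const 2)
      hφmeas.aestronglyMeasurable ?_
    filter_upwards with x
    rw [Real.norm_eq_abs, abs_of_nonneg (hφ0 x)]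
    exact hφle x
  set S : ℝ := ∫ x, φ x ∂ν with hSdef
  -- pointwise a.e. linear lower bound for φ
  have hpt : ∀ᵐ x ∂ν, Real.exp m * ((1 - m) * g x + f x * g x) ≤ φ x := by
    filter_upwards [habs] with x hx
    rcases eq_or_lt_of_le (hg0 x) with hg | hg
    · simp [hφdef, ← hg]
    · have hh : 0 < h x := by
        rcases eq_or_lt_of_le (hh0 x) with hh | hh
        · exact absurd (hx hh.symm) (ne_of_gt hg)
        · exact hh
      have hr : 0 < g x / h x := div_pos hg hh
      have hexpf : Real.exp (f x) * g x = φ x := by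
        have h1 : Real.exp (f x) = Real.sqrt (h x / g x) := by
          rw [Real.sqrt_eq_rpow, Real.rpow_def_of_pos (div_pos hh hg),
            show h x / g x = (g x / h x)⁻¹ by rw [inv_div], Real.log_inv, hfdef]
          congr 1; ring
        rw [h1]
        calc Real.sqrt (h x / g x) * g x
            = Real.sqrt (h x / g x) * Real.sqrt ((g x) ^ 2) := by
              rw [Real.sqrt_sq hg.le]
          _ = Real.sqrt (h x / g x * (g x) ^ 2) := by
              rw [← Real.sqrt_mul (by positivity)]
          _ = φ x := by rw [hφdef]; congr 1; field_simp
      have hc : (0:ℝ) ≤ Real.exp m * g x := by positivity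
      have hexp := mul_le_mul_of_nonneg_right (Real.add_one_le_exp (f x - m)) hc
      have he : Real.exp (f x - m) * (Real.exp m * g x) = Real.exp (f x) * g x := by
        rw [← mul_assoc, ← Real.exp_add]; ring_nf
      nlinarith [hexpf, he, hexp]
  have hlin_int : Integrable (fun x => Real.exp m * ((1 - m) * g x + f x * g x)) ν :=
    (((hgint.const_mul (1 - m)).add hfg_int).const_mul _)
  have hS : Real.exp m ≤ S := by
    have hmono := integral_mono_ae hlin_int hφint hpt
    calc Real.exp m = ∫ x, Real.exp m * ((1 - m) * g x + f x * g x) ∂ν := by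
          rw [integral_const_mul, integral_add (hgint.const_mul _) hfg_int,
            integral_const_mul, hg1, hfg_integral]; ring
      _ ≤ S := hmono
  -- min and max
  have hminmeas : Measurable fun x => min (g x) (h x) := hgm.min hhm
  have hminint : Integrable (fun x => min (g x) (h x)) ν := by
    refine Integrable.mono' hgint hminmeas.aestronglyMeasurable ?_
    filter_upwards with x
    rw [Real.norm_eq_abs, abs_of_nonneg (le_min (hg0 x) (hh0 x))]
    exact min_le_left _ _
  have hmaxint : Integrable (fun x => max (g x) (h x)) ν := by
    have e : (fun x => max (g x) (h x)) = fun x => g x + h x - min (g x) (h x) := by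
      funext x; have := min_add_max (g x) (h x); linarith
    rw [e]; exact (hgint.add hhint).sub hminint
  set M : ℝ := ∫ x, min (g x) (h x) ∂ν with hMdef
  have hM0 : 0 ≤ M := integral_nonneg fun x => le_min (hg0 x) (hh0 x)
  have hsum : M + ∫ x, max (g x) (h x) ∂ν = 2 := by
    rw [hMdef, ← integral_add hminint hmaxint]
    simp_rw [min_add_max]
    rw [integral_add hgint hhint, hg1, hh1]; norm_num
  have hmaxI : ∫ x, max (g x) (h x) ∂ν = 2 - M := by linarith
  have hM2 : M ≤ 1 := by
    rw [hMdef, ← hg1]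
    exact integral_mono hminint hgint fun x => min_le_left _ _
  -- for each t > 0, S ≤ (t M + (2 - M)/t)/2
  have key : ∀ t : ℝ, 0 < t → S ≤ (t * M + (2 - M) / t) / 2 := by
    intro t ht
    have hpt2 : ∀ x, φ x ≤ (t * min (g x) (h x) + max (g x) (h x) / t) / 2 := by
      intro x
      have hmin0 : 0 ≤ min (g x) (h x) := le_min (hg0 x) (hh0 x)
      have hmax0 : 0 ≤ max (g x) (h x) := (hg0 x).trans (le_max_left _ _)
      have key0 := sqrt_mul_le_add_div_two (mul_nonneg ht.le hmin0)
        (div_nonneg hmax0 ht.le)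
      have e1 : t * min (g x) (h x) * (max (g x) (h x) / t)
          = min (g x) (h x) * max (g x) (h x) := by field_simp
      rw [e1, min_mul_max] at key0
      exact key0
    calc S ≤ ∫ x, (t * min (g x) (h x) + max (g x) (h x) / t) / 2 ∂ν := by
          rw [hSdef]
          refine integral_mono hφint ?_ hpt2
          exact ((hminint.const_mul t).add (hmaxint.div_const t)).div_const 2
      _ = (t * M + (2 - M) / t) / 2 := by
          rw [integral_div, integral_add (hminint.const_mul t) (hmaxint.div_const t),
            integral_const_mul, integral_div, hmaxI, ← hMdef]
  have hSpos : 0 < S := lt_of_lt_of_le (Real.exp_pos m) hS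
  have hMpos : 0 < M := by
    by_contra hc
    push_neg at hc
    have hM0' : M = 0 := le_antisymm hc hM0
    have hk := key (2 / S) (by positivity)
    rw [hM0'] at hk
    have e : (2 / S * 0 + (2 - 0) / (2 / S)) / 2 = S / 2 := by field_simp; ring
    rw [e] at hk
    linarith
  have huprod : (0:ℝ) < (2 - M) * M := by nlinarith
  set u : ℝ := Real.sqrt ((2 - M) * M) with hudef
  have hu : 0 < u := Real.sqrt_pos.2 huprod
  have hu2 : u ^ 2 = (2 - M) * M := Real.sq_sqrt huprod.le
  have hkey := key (u / M) (by positivity)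
  have h1 : u / M * M = u := div_mul_cancel₀ u (ne_of_gt hMpos)
  have h2 : (2 - M) / (u / M) = u := by
    rw [div_div_eq_mul_div, ← hu2, sq, mul_div_assoc, div_self hu.ne', mul_one]
  rw [h1, h2] at hkey
  have hSu : Real.exp m ≤ u := hS.trans (by linarith)
  have hsq : Real.exp m ^ 2 ≤ (2 - M) * M := by nlinarith [Real.exp_pos m]
  have hexp2 : Real.exp m ^ 2 = Real.exp (-KL) := by
    rw [sq, ← Real.exp_add]; congr 1; rw [hmdef]; ring
  nlinarith [hsq, hexp2, Real.exp_pos (-KL)]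
end
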